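/- If I is a w-stable ideal for some weight vector w, then the set of weighted Borel generators Bgens_w(I) is contained in the set of classical Borel generators Bgens(I). -/

import Mathlib

open Finset

/-- A monomial in `n` variables, given by its exponent vector. -/
abbrev Mon (n : ℕ) := Fin n → ℕ

/-- The set of monomials of a monomial ideal: a set of monomials upward closed
under divisibility (i.e. closed under multiplication by monomials). -/
def IsMonIdeal {n : ℕ} (I : Set (Mon n)) : Prop := ∀ a ∈ I, ∀ b, a ≤ b → b ∈ I

/-- The Borel move sending `m` to `m · y_i / y_j`. -/
def borelMove {n : ℕ} (m : Mon n) (i j : Fin n) : Mon n :=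
  fun k => if k = i then m k + 1 else if k = j then m k - 1 else m k

/-- A monomial ideal is strongly stable if it is closed under Borel moves
`m ↦ m · y_i / y_j` for `i < j` and `y_j ∣ m`. -/
def StronglyStable {n : ℕ} (I : Set (Mon n)) : Prop :=
  IsMonIdeal I ∧ ∀ m ∈ I, ∀ i j : Fin n, i < j → 0 < m j → borelMove m i j ∈ I

/-- `borelCl T` : the smallest strongly stable ideal containing the set of monomials `T`. -/
def borelCl {n : ℕ} (T : Set (Mon n)) : Set (Mon n) :=
  ⋂₀ {J : Set (Mon n) | StronglyStable J ∧ T ⊆ J}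

/-- The map `ψ : S → R`, `x_i ↦ y_i^{w_i}`, on exponent vectors. -/
def psi {n : ℕ} (w : Fin n → ℕ) (a : Mon n) : Mon n := fun i => w i * a i

/-- A monomial ideal `I ⊆ S` is `w`-stable if it equals its weighted Borel
closure `ψ⁻¹(Borel(ψ(I)))`. -/
def wStable {n : ℕ} (w : Fin n → ℕ) (I : Set (Mon n)) : Prop :=
  I = psi w ⁻¹' borelCl (psi w '' I)

/-- Total degree of a monomial. -/
def deg {n : ℕ} (m : Mon n) : ℕ := ∑ i, m i

/-- Weighted degree `deg_w(m) = deg(ψ(m))`. -/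
def degW {n : ℕ} (w : Fin n → ℕ) (m : Mon n) : ℕ := ∑ i, w i * m i

/-- `psum m t` : the number of variables (with multiplicity) of index `≤ t`
in the factorization of `m`. -/
def psum {n : ℕ} (m : Mon n) (t : Fin n) : ℕ := ∑ i ∈ Finset.univ.filter (· ≤ t), m i

/-- `psumLt m t` : the number of variables (with multiplicity) of index `< t`. -/
def psumLt {n : ℕ} (m : Mon n) (t : Fin n) : ℕ := ∑ i ∈ Finset.univ.filter (· < t), m i

/-- `precedes u v` : `u ≻ v`, i.e. `u` precedes `v` in the Borel order: writing
`u = y_{i_1}⋯y_{i_r}`, `v = y_{j_1}⋯y_{j_s}` with increasing indices and `r ≥ s`,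
we have `i_k ≤ j_k` for all `k ≤ s`.  Equivalently, for every index `t` the number
of factors of `v` of index `≤ t` is at most that of `u`. -/
def precedes {n : ℕ} (u v : Mon n) : Prop := ∀ t : Fin n, psum v t ≤ psum u t

/-- `max(m)` : the largest (1-based) index of a variable dividing `m` (`0` for `m = 1`). -/
def maxVar {n : ℕ} (m : Mon n) : ℕ :=
  (Finset.univ.filter (fun i => m i ≠ 0)).sup (fun i => i.val + 1)

/-- `max(m)` with the convention `max(1) = 1`. -/
def maxVarOne {n : ℕ} (m : Mon n) : ℕ := max 1 (maxVar m)

/-- `trunc d m` : the `d`-truncation of a monomial, keeping the first `d`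
variables (with multiplicity) of the increasing factorization of `m`
(equal to `m` itself when `d ≥ deg m`). -/
def trunc {n : ℕ} (d : ℕ) (m : Mon n) : Mon n :=
  fun k => min (psum m k) d - min (psumLt m k) d

/-- The `d`-truncation of a monomial ideal: the ideal generated by the
`d`-truncations of all its monomials. -/
def truncIdeal {n : ℕ} (d : ℕ) (J : Set (Mon n)) : Set (Mon n) :=
  {v | ∃ m ∈ J, trunc d m ≤ v}

/-- `minGens J` : the minimal monomial generators of a monomial ideal, i.e. its
monomials not properly divisible by another monomial of the ideal. -/
def minGens {n : ℕ} (J : Set (Mon n)) : Set (Mon n) :=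
  {u ∈ J | ∀ v ∈ J, v ≤ u → v = u}


/-- `Bgens(J)` : the monomials that lie in every Borel generating set of `J`
(for a strongly stable ideal this is the unique minimal set of Borel generators). -/
def bgens {n : ℕ} (J : Set (Mon n)) : Set (Mon n) := {m | ∀ T, borelCl T = J → m ∈ T}

lemma stronglyStable_univ {n : ℕ} : StronglyStable (Set.univ : Set (Mon n)) :=
  ⟨fun _ _ _ _ => trivial, fun _ _ _ _ _ _ => trivial⟩

lemma subset_borelCl {n : ℕ} (T : Set (Mon n)) : T ⊆ borelCl T :=
  fun m hm J hJ => hJ.2 hm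

lemma borelCl_min {n : ℕ} {T J : Set (Mon n)} (hJ : StronglyStable J) (hTJ : T ⊆ J) :
    borelCl T ⊆ J := fun m hm => hm J ⟨hJ, hTJ⟩

lemma stronglyStable_borelCl {n : ℕ} (T : Set (Mon n)) : StronglyStable (borelCl T) := by
  constructor
  · intro a ha b hab J hJ
    exact hJ.1.1 a (ha J hJ) b hab
  · intro m hm i j hij hj J hJ
    exact hJ.1.2 m (hm J hJ) i j hij hj

/-- iterated Borel move -/
def movePow {n : ℕ} (u : Mon n) (i j : Fin n) (s : ℕ) : Mon n :=
  fun k => if k = i then u k + s else if k = j then u k - s else u k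

lemma movePow_mem {n : ℕ} {J : Set (Mon n)} (hJ : StronglyStable J) {u : Mon n} (hu : u ∈ J)
    {i j : Fin n} (hij : i < j) (s : ℕ) (hs : s ≤ u j) : movePow u i j s ∈ J := by
  induction s with
  | zero =>
    have : movePow u i j 0 = u := by
      funext k; simp [movePow]
    rwa [this]
  | succ s ih =>
    have hs' : s ≤ u j := Nat.le_of_succ_le hs
    have hmem := ih hs'
    have hne : j ≠ i := ne_of_gt hij
    have hjpos : 0 < movePow u i j s j := by
      simp [movePow, hne]
      omega
    have := hJ.2 _ hmem i j hij hjpos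
    have heq : borelMove (movePow u i j s) i j = movePow u i j (s + 1) := by
      funext k
      by_cases hki : k = i
      · subst hki
        simp [borelMove, movePow]
        omega
      · by_cases hkj : k = j
        · simp only [borelMove, movePow, if_neg hki, if_pos hkj]
          omega
        · simp [borelMove, movePow, hki, hkj]
    rwa [heq] at this

lemma stronglyStable_preimage_psi {n : ℕ} (w : Fin n → ℕ) (hpos : ∀ i, 0 < w i)
    (hmono : Antitone w) {J : Set (Mon n)} (hJ : StronglyStable J) :
    StronglyStable (psi w ⁻¹' J) := by
  constructor
  · intro a ha b hab
    exact hJ.1 _ ha _ (fun i => Nat.mul_le_mul_left _ (hab i))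
  · intro m hm i j hij hj
    have hne : j ≠ i := ne_of_gt hij
    have hmv := movePow_mem hJ hm hij (w j) (Nat.le_mul_of_pos_right _ hj)
    apply hJ.1 _ hmv
    intro k
    simp only [movePow, psi, borelMove]
    by_cases hki : k = i
    · subst hki
      have h2 : w j ≤ w k := hmono (le_of_lt hij)
      have h3 : w k * (m k + 1) = w k * m k + w k := by ring
      simp [h3]
      omega
    · by_cases hkj : k = j
      · subst hkj
        have h1 : 1 ≤ m k := hj
        have h2 : w k * (m k - 1) + w k = w k * m k := by
          rw [← Nat.mul_succ]; congr 1; omega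
        simp [hki]
        omega
      · simp [hki, hkj]

lemma psi_injective {n : ℕ} (w : Fin n → ℕ) (hpos : ∀ i, 0 < w i) :
    Function.Injective (psi w) := by
  intro a b hab
  funext i
  have := congrFun hab i
  simp only [psi] at this
  exact Nat.eq_of_mul_eq_mul_left (hpos i) this

/-- If `I` is `w`-stable, then `Bgens_w(I) = ψ⁻¹(Bgens(Borel(ψ(I))))`
is contained in `Bgens(I)`, the classical (weight-one) Borel generators of `I`. -/
theorem stmt9 {n : ℕ} (w : Fin n → ℕ) (hpos : ∀ i, 0 < w i) (hmono : Antitone w) (I : Set (Mon n)) (hI : IsMonIdeal I)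
    (hws : wStable w I) :
    psi w ⁻¹' bgens (borelCl (psi w '' I)) ⊆ bgens I := by
  intro a ha T hT
  -- key: borelCl (psi w '' T) = borelCl (psi w '' I)
  have hTI : T ⊆ I := hT ▸ subset_borelCl T
  have hSS : StronglyStable (psi w ⁻¹' borelCl (psi w '' T)) :=
    stronglyStable_preimage_psi w hpos hmono (stronglyStable_borelCl _)
  have hTsub : T ⊆ psi w ⁻¹' borelCl (psi w '' T) :=
    fun m hm => subset_borelCl _ ⟨m, hm, rfl⟩
  have hIsub : I ⊆ psi w ⁻¹' borelCl (psi w '' T) := by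
    rw [← hT]; exact borelCl_min hSS hTsub
  have h1 : borelCl (psi w '' I) ⊆ borelCl (psi w '' T) := by
    apply borelCl_min (stronglyStable_borelCl _)
    rintro _ ⟨m, hm, rfl⟩
    exact hIsub hm
  have h2 : borelCl (psi w '' T) ⊆ borelCl (psi w '' I) := by
    apply borelCl_min (stronglyStable_borelCl _)
    apply Set.Subset.trans _ (subset_borelCl (psi w '' I))
    exact Set.image_mono hTI
  have heq : borelCl (psi w '' T) = borelCl (psi w '' I) := Set.Subset.antisymm h2 h1
  have := ha (psi w '' T) heq
  obtain ⟨b, hb, hba⟩ := this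
  rwa [← psi_injective w hpos hba]
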